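/- Let R be a DBW-refuter for L ⊆ Σ^ω with n states. Then there exists a certificate (x, x₁, x₂) for non-DBW-recognizability of L with |x| + |x₁| + |x₂| ≤ 2·n. -/

import Mathlib

/-- An (A/α)-transducer: reads letters of `A`, outputs letters of `α`. -/
structure Transducer (A α : Type) where
  S : Type
  [fin : Fintype S]
  init : S
  ρ : S → A → S
  τ : S → α

attribute [instance] Transducer.fin

def Transducer.run {A α : Type} (T : Transducer A α) (y : ℕ → A) : ℕ → T.S
  | 0 => T.init
  | n + 1 => T.ρ (T.run y n) (y n)

/-- Output with environment initiation: output letter `j` is emitted at state `s_{j+1}`. -/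
def Transducer.out {A α : Type} (T : Transducer A α) (y : ℕ → A) : ℕ → α :=
  fun j => T.τ (T.run y (j + 1))

/-- A DBW-refuter for `L`: a ({acc,rej}/Σ)-transducer (with `true` = acc, `false` = rej)
such that for every input `y`, the output is in `L` iff `y` has only finitely many acc's. -/
def DBWRefuter {α : Type} (L : Set (ℕ → α)) (R : Transducer Bool α) : Prop :=
  ∀ y : ℕ → Bool, R.out y ∈ L ↔ {j | y j = true}.Finite

/-- `u` is a prefix of the infinite word `w`. -/
def HasPrefixWord {α : Type} (w : ℕ → α) (u : List α) : Prop :=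
  ∀ i : Fin u.length, w i.1 = u.get i

/-- The ω-language `x·(x₁+x₂)*·x₁^ω`. -/
def LangA {α : Type} (x x₁ x₂ : List α) : Set (ℕ → α) :=
  { w | ∃ ws : List (List α), (∀ u ∈ ws, u = x₁ ∨ u = x₂) ∧
        ∀ n, HasPrefixWord w (x ++ ws.flatten ++ (List.replicate n x₁).flatten) }

/-- The ω-language `x·(x₁*·x₂)^ω`. -/
def LangB {α : Type} (x x₁ x₂ : List α) : Set (ℕ → α) :=
  { w | ∃ j : ℕ → ℕ, ∀ n, HasPrefixWord w
        (x ++ ((List.range n).map (fun i => (List.replicate (j i) x₁).flatten ++ x₂)).flatten) }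

namespace Cert

section Y

variable (u₀ : List Bool) (blk : ℕ → List Bool)

def PP (n : ℕ) : List Bool := u₀ ++ ((List.range n).map blk).flatten

lemma PP_succ (n : ℕ) : PP u₀ blk (n + 1) = PP u₀ blk n ++ blk n := by
  simp [PP, List.range_succ]

lemma PP_prefix {n m : ℕ} (h : n ≤ m) : PP u₀ blk n <+: PP u₀ blk m := by
  induction m with
  | zero => simp_all
  | succ m ih =>
    rcases Nat.lt_or_ge n (m+1) with h' | h'
    · exact (ih (by omega)).trans (by rw [PP_succ]; exact List.prefix_append _ _)
    · have : n = m + 1 := by omega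
      subst this; exact List.prefix_rfl

lemma len_PP (hblk : ∀ i, blk i ≠ []) (n : ℕ) : n ≤ (PP u₀ blk n).length := by
  induction n with
  | zero => simp
  | succ n ih =>
    rw [PP_succ]
    have : 1 ≤ (blk n).length := List.length_pos_iff.mpr (hblk n)
    simp only [List.length_append]
    omega

def YY : ℕ → Bool := fun k => (PP u₀ blk (k + 1)).getD k false

lemma YY_agree (hblk : ∀ i, blk i ≠ []) (n : ℕ) (i : ℕ) (hi : i < (PP u₀ blk n).length) :
    YY u₀ blk i = (PP u₀ blk n)[i] := by
  have hlen : i < (PP u₀ blk (i + 1)).length := by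
    have := len_PP u₀ blk hblk (i + 1); omega
  have h1 : YY u₀ blk i = (PP u₀ blk (i + 1))[i] := List.getD_eq_getElem _ _ hlen
  rcases le_total n (i + 1) with h | h
  · rw [h1, ← List.IsPrefix.getElem (PP_prefix u₀ blk h) hi]
  · rw [h1, List.IsPrefix.getElem (PP_prefix u₀ blk h) hlen]

end Y

variable {Sig : Type} (R : Transducer Bool Sig)

def dstar (s : R.S) (w : List Bool) : R.S := w.foldl R.ρ s

@[simp] lemma dstar_nil (s : R.S) : dstar R s [] = s := rfl

@[simp] lemma dstar_cons (s : R.S) (b : Bool) (w : List Bool) :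
    dstar R s (b :: w) = dstar R (R.ρ s b) w := rfl

@[simp] lemma dstar_append (s : R.S) (v w : List Bool) :
    dstar R s (v ++ w) = dstar R (dstar R s v) w := List.foldl_append ..

def outList : R.S → List Bool → List Sig
  | _, [] => []
  | s, b :: w => R.τ (R.ρ s b) :: outList (R.ρ s b) w

@[simp] lemma outList_nil (s : R.S) : outList R s [] = [] := rfl

@[simp] lemma outList_cons (s : R.S) (b : Bool) (w : List Bool) :
    outList R s (b :: w) = R.τ (R.ρ s b) :: outList R (R.ρ s b) w := rfl

@[simp] lemma length_outList (s : R.S) (w : List Bool) :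
    (outList R s w).length = w.length := by
  induction w generalizing s with
  | nil => rfl
  | cons b w ih => simp [ih]

lemma outList_append (s : R.S) (v w : List Bool) :
    outList R s (v ++ w) = outList R s v ++ outList R (dstar R s v) w := by
  induction v generalizing s with
  | nil => simp
  | cons b v ih => simp [ih]

lemma outList_getElem (s : R.S) (w : List Bool) (i : ℕ) (hi : i < w.length) :
    (outList R s w)[i]'(by simpa using hi) = R.τ (dstar R s (w.take (i + 1))) := by
  induction w generalizing s i with
  | nil => simp at hi
  | cons b w ih =>
    cases i with
    | zero => simp
    | succ i => simpa using ih (R.ρ s b) i (by simpa using hi)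

lemma run_agree (y : ℕ → Bool) (w : List Bool)
    (h : ∀ i (hi : i < w.length), y i = w[i]) :
    ∀ k, k ≤ w.length → R.run y k = dstar R R.init (w.take k) := by
  intro k
  induction k with
  | zero => intro _; simp [Transducer.run]
  | succ k ih =>
    intro hk
    have hk' : k < w.length := hk
    have : w.take (k + 1) = w.take k ++ [w[k]] := by
      rw [List.take_succ]; simp [List.getElem?_eq_getElem hk']
    rw [this]
    simp only [Transducer.run, dstar_append, ih (le_of_lt hk'), h k hk']
    rfl

lemma out_agree (y : ℕ → Bool) (w : List Bool)
    (h : ∀ i (hi : i < w.length), y i = w[i]) (i : ℕ) (hi : i < w.length) :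
    R.out y i = (outList R R.init w)[i]'(by simpa using hi) := by
  rw [outList_getElem R R.init w i hi]
  unfold Transducer.out
  rw [run_agree R y w h (i+1) hi]

lemma loop_flatten (s : R.S) (Lw : List (List Bool)) (h : ∀ b ∈ Lw, dstar R s b = s) :
    dstar R s Lw.flatten = s ∧ outList R s Lw.flatten = (Lw.map (outList R s)).flatten := by
  induction Lw with
  | nil => simp
  | cons b Lw ih =>
    have hb : dstar R s b = s := h b (by simp)
    have ih' := ih (fun b' hb' => h b' (by simp [hb']))
    constructor
    · simp [hb, ih'.1]
    · simp [outList_append, hb, ih'.2]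

lemma getElem_list_congr {α : Type*} {l l' : List α} (h : l = l') {i : ℕ}
    (hi : i < l.length) : l[i]'hi = l'[i]'(h ▸ hi) := by subst h; rfl

lemma getElem_idx_congr {α : Type*} (l : List α) {i j : ℕ} (h : i = j)
    (hi : i < l.length) : l[i]'hi = l[j]'(h ▸ hi) := by subst h; rfl

/-- The key transfer lemma: if `wInf` has all the `outList`s of the `PP`s as prefixes,
then it equals the refuter's output on `YY`. -/
lemma out_eq_of_prefixes (u₀ : List Bool) (blk : ℕ → List Bool) (hblk : ∀ i, blk i ≠ [])
    (wInf : ℕ → Sig) (hpre : ∀ n, HasPrefixWord wInf (outList R R.init (PP u₀ blk n))) :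
    wInf = R.out (YY u₀ blk) := by
  funext k
  have hlen : k < (PP u₀ blk (k + 1)).length := by
    have := len_PP u₀ blk hblk (k + 1); omega
  have hlen' : k < (outList R R.init (PP u₀ blk (k + 1))).length := by
    rw [length_outList]; exact hlen
  have h := hpre (k + 1) ⟨k, hlen'⟩
  rw [h]
  have hagree : ∀ i (hi : i < (PP u₀ blk (k + 1)).length),
      YY u₀ blk i = (PP u₀ blk (k + 1))[i] := fun i hi => YY_agree u₀ blk hblk (k + 1) i hi
  rw [out_agree R (YY u₀ blk) (PP u₀ blk (k + 1)) hagree k hlen]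
  simp [List.get_eq_getElem]

lemma langA_sub (L : Set (ℕ → Sig)) (hR : DBWRefuter L R) (s : R.S)
    (uin w₁in w₂in : List Bool)
    (hu : dstar R R.init uin = s) (h1 : dstar R s w₁in = s) (h2 : dstar R s w₂in = s)
    (h1rej : ∀ b ∈ w₁in, b = false) (h1ne : w₁in ≠ []) :
    LangA (outList R R.init uin) (outList R s w₁in) (outList R s w₂in) ⊆ L := by
  classical
  set x := outList R R.init uin with hx
  set x₁ := outList R s w₁in with hx₁
  set x₂ := outList R s w₂in with hx₂
  intro wInf hw
  obtain ⟨ws, hws, hpre⟩ := hw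
  set g : List Sig → List Bool := fun u' => if u' = x₁ then w₁in else w₂in with hg
  have hgl : ∀ u' ∈ ws, dstar R s (g u') = s ∧ outList R s (g u') = u' := by
    intro u' hu'
    by_cases hcase : u' = x₁
    · simp [hg, hcase, h1, hx₁]
    · rcases hws u' hu' with h | h
      · exact absurd h hcase
      · subst h; simp [hg, hcase, h2]; exact hx₂.symm
  set u₀ := uin ++ (ws.map g).flatten with hu₀def
  have hloopG := loop_flatten R s (ws.map g) (by
    intro b hb
    obtain ⟨u', hu', rfl⟩ := List.mem_map.mp hb
    exact (hgl u' hu').1)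
  have hu₀ : dstar R R.init u₀ = s := by
    rw [hu₀def, dstar_append, hu, hloopG.1]
  have hu₀out : outList R R.init u₀ = x ++ ws.flatten := by
    rw [hu₀def, outList_append, hu, hloopG.2, ← hx]
    congr 1
    rw [List.map_map]
    have : ∀ u' ∈ ws, (outList R s ∘ g) u' = id u' := fun u' hu' => (hgl u' hu').2
    rw [List.map_congr_left this, List.map_id]
  set blk : ℕ → List Bool := fun _ => w₁in with hblkdef
  have hblk : ∀ i, blk i ≠ [] := fun _ => h1ne
  have houtPP : ∀ n, outList R R.init (PP u₀ blk n) =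
      x ++ ws.flatten ++ (List.replicate n x₁).flatten := by
    intro n
    have hloopF := loop_flatten R s (((List.range n).map blk)) (by
      intro b hb
      obtain ⟨i, _, rfl⟩ := List.mem_map.mp hb
      exact h1)
    rw [PP, outList_append, hu₀, hu₀out, hloopF.2]
    congr 1
    rw [List.map_map]
    have h1' : ((List.range n).map (outList R s ∘ blk)) = List.replicate n x₁ := by
      rw [List.eq_replicate_iff]
      constructor
      · simp
      · intro b hb
        obtain ⟨i, _, rfl⟩ := List.mem_map.mp hb
        rfl
    rw [h1']
  have hpre' : ∀ n, HasPrefixWord wInf (outList R R.init (PP u₀ blk n)) := by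
    intro n; rw [houtPP n]; exact hpre n
  have hwout := out_eq_of_prefixes R u₀ blk hblk wInf hpre'
  have hfin : {j | YY u₀ blk j = true}.Finite := by
    apply Set.Finite.subset (Set.finite_Iio u₀.length)
    intro k hk
    simp only [Set.mem_setOf_eq] at hk
    simp only [Set.mem_Iio]
    by_contra hge
    push_neg at hge
    have hlen : k < (PP u₀ blk (k + 1)).length := by
      have := len_PP u₀ blk hblk (k + 1); omega
    have hY : YY u₀ blk k = (PP u₀ blk (k + 1))[k] := YY_agree u₀ blk hblk (k + 1) k hlen
    have hlen2 : k - u₀.length < (((List.range (k+1)).map blk).flatten).length := by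
      have : (PP u₀ blk (k+1)).length = u₀.length + (((List.range (k+1)).map blk).flatten).length := by
        simp [PP]
      omega
    have hsplit : (PP u₀ blk (k + 1))[k]'hlen =
        (((List.range (k+1)).map blk).flatten)[k - u₀.length]'hlen2 :=
      List.getElem_append_right hge
    have hmem : (((List.range (k+1)).map blk).flatten)[k - u₀.length]'hlen2 ∈
        ((List.range (k+1)).map blk).flatten := List.getElem_mem _
    rw [List.mem_flatten] at hmem
    obtain ⟨l, hl, hmem⟩ := hmem
    obtain ⟨i, _, rfl⟩ := List.mem_map.mp hl
    have : (((List.range (k+1)).map blk).flatten)[k - u₀.length]'hlen2 = false :=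
      h1rej _ hmem
    rw [hY, hsplit, this] at hk
    exact Bool.false_ne_true hk
  rw [hwout]
  exact (hR (YY u₀ blk)).mpr hfin

lemma langB_empty (L : Set (ℕ → Sig)) (hR : DBWRefuter L R) (s : R.S)
    (uin w₁in : List Bool) (wtail : List Bool)
    (hu : dstar R R.init uin = s) (h1 : dstar R s w₁in = s)
    (h2 : dstar R s (true :: wtail) = s) :
    LangB (outList R R.init uin) (outList R s w₁in) (outList R s (true :: wtail)) ∩ L = ∅ := by
  classical
  set w₂in : List Bool := true :: wtail with hw₂def
  set x := outList R R.init uin with hx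
  set x₁ := outList R s w₁in with hx₁
  set x₂ := outList R s w₂in with hx₂
  rw [Set.eq_empty_iff_forall_notMem]
  rintro wInf ⟨hB, hL⟩
  obtain ⟨jf, hpre⟩ := hB
  set blk : ℕ → List Bool := fun i => (List.replicate (jf i) w₁in).flatten ++ w₂in with hblkdef
  have hblk : ∀ i, blk i ≠ [] := by
    intro i h
    rw [hblkdef] at h
    simp only [List.append_eq_nil_iff] at h
    exact List.cons_ne_nil _ _ h.2
  have hloopflat : ∀ k, dstar R s ((List.replicate k w₁in).flatten) = s ∧
      outList R s ((List.replicate k w₁in).flatten) = (List.replicate k x₁).flatten := by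
    intro k
    have := loop_flatten R s (List.replicate k w₁in) (by
      intro b hb; rw [List.eq_of_mem_replicate hb]; exact h1)
    refine ⟨this.1, ?_⟩
    rw [this.2, List.map_replicate]
  have hblkloop : ∀ i, dstar R s (blk i) = s := by
    intro i
    rw [hblkdef]
    simp only [dstar_append, (hloopflat (jf i)).1]
    exact h2
  have hblkout : ∀ i, outList R s (blk i) = (List.replicate (jf i) x₁).flatten ++ x₂ := by
    intro i
    rw [hblkdef]
    simp only [outList_append, (hloopflat (jf i)).1, (hloopflat (jf i)).2]; rfl
  have houtPP : ∀ n, outList R R.init (PP uin blk n) =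
      x ++ ((List.range n).map (fun i => (List.replicate (jf i) x₁).flatten ++ x₂)).flatten := by
    intro n
    have hloopF := loop_flatten R s (((List.range n).map blk)) (by
      intro b hb
      obtain ⟨i, _, rfl⟩ := List.mem_map.mp hb
      exact hblkloop i)
    rw [PP, outList_append, hu, hloopF.2, ← hx]
    congr 1
    rw [List.map_map]
    congr 1
    apply List.map_congr_left
    intro i _
    exact hblkout i
  have hpre' : ∀ n, HasPrefixWord wInf (outList R R.init (PP uin blk n)) := by
    intro n; rw [houtPP n]; exact hpre n
  have hwout := out_eq_of_prefixes R uin blk hblk wInf hpre'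
  have hinf : ¬ {j | YY uin blk j = true}.Finite := by
    intro hfin
    obtain ⟨M, hM⟩ := hfin.bddAbove
    set N := M + 1 with hN
    set flat := (List.replicate (jf N) w₁in).flatten with hflatdef
    set idx := (PP uin blk N).length + flat.length with hidx
    have hPP1 : PP uin blk (N + 1) = (PP uin blk N ++ flat) ++ (true :: wtail) := by
      rw [PP_succ, hblkdef]
      simp [hw₂def, List.append_assoc]; rfl
    have hlen1 : (PP uin blk N ++ flat).length = idx := by
      simp [hidx]
    have hidxlt : idx < (PP uin blk (N + 1)).length := by
      rw [hPP1, List.length_append, hlen1]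
      simp
    have hY : YY uin blk idx = (PP uin blk (N + 1))[idx] :=
      YY_agree uin blk hblk (N + 1) idx hidxlt
    have hval : (PP uin blk (N + 1))[idx]'hidxlt = true := by
      rw [getElem_list_congr hPP1 hidxlt]
      rw [List.getElem_append_right (le_of_eq hlen1)]
      · have hz : idx - (PP uin blk N ++ flat).length = 0 := by omega
        rw [getElem_idx_congr _ hz]
        exact List.getElem_cons_zero _ _ _
    have hmem : idx ∈ {j | YY uin blk j = true} := by
      simp only [Set.mem_setOf_eq]
      rw [hY, hval]
    have hle := hM hmem
    have hge : N ≤ idx := by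
      have := len_PP uin blk hblk N
      omega
    omega
  rw [hwout] at hL
  exact hinf ((hR (YY uin blk)).mp hL)

def Reach (p q : R.S) : Prop := ∃ w : List Bool, dstar R p w = q

lemma reach_refl (p : R.S) : Reach R p p := ⟨[], rfl⟩

lemma reach_trans {p q r : R.S} (h1 : Reach R p q) (h2 : Reach R q r) : Reach R p r := by
  obtain ⟨w1, hw1⟩ := h1; obtain ⟨w2, hw2⟩ := h2
  exact ⟨w1 ++ w2, by simp [hw1, hw2]⟩

lemma exists_min_word (p : List Bool → Prop) (h : ∃ w, p w) :
    ∃ w, p w ∧ ∀ w', p w' → w.length ≤ w'.length := by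
  classical
  have h2 : ∃ k, ∃ w : List Bool, p w ∧ w.length = k :=
    ⟨h.choose.length, h.choose, h.choose_spec, rfl⟩
  obtain ⟨w, hw, hlen⟩ := Nat.find_spec h2
  exact ⟨w, hw, fun w' hw' => hlen ▸ Nat.find_le ⟨w', hw', rfl⟩⟩

lemma dstar_mem_closed {B : Finset R.S} (hB : ∀ q ∈ B, ∀ bb, R.ρ q bb ∈ B)
    {q : R.S} (hq : q ∈ B) (w : List Bool) : dstar R q w ∈ B := by
  induction w generalizing q with
  | nil => simpa
  | cons b w ih => exact ih (hB q hq b)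

/-- Shortest word into a target set `T`: length at most `n - |T|`. -/
lemma min_word_to_set (p : R.S) (T : Finset R.S) (hT : ∃ w, dstar R p w ∈ T) :
    ∃ w, dstar R p w ∈ T ∧ w.length ≤ Fintype.card R.S - T.card := by
  classical
  obtain ⟨w, hw, hmin⟩ := exists_min_word (fun w => dstar R p w ∈ T) hT
  refine ⟨w, hw, ?_⟩
  have hnotin : ∀ i, i < w.length → dstar R p (w.take i) ∉ T := by
    intro i hi hcon
    have := hmin _ hcon
    simp [Nat.le_min, List.length_take] at this
    omega
  have key : ∀ a b : ℕ, a < b → b < w.length + 1 →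
      dstar R p (w.take a) = dstar R p (w.take b) → False := by
    intro a b hab hb heq
    have hcut : dstar R p (w.take a ++ w.drop b) ∈ T := by
      have h2 : dstar R p (w.take b ++ w.drop b) ∈ T := by
        rw [List.take_append_drop]; exact hw
      simp only [dstar_append] at h2 ⊢
      rw [heq]; exact h2
    have := hmin _ hcut
    simp [List.length_append, List.length_take, List.length_drop] at this
    omega
  have hinj : Set.InjOn (fun i => dstar R p (w.take i)) (Finset.range w.length) := by
    intro i hi i' hi' heq
    have heq' : dstar R p (w.take i) = dstar R p (w.take i') := heq
    simp only [Finset.coe_range, Set.mem_Iio] at hi hi'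
    rcases lt_trichotomy i i' with h | h | h
    · exact absurd heq' (by intro hc; exact key i i' h (by omega) hc)
    · exact h
    · exact absurd heq'.symm (by intro hc; exact key i' i h (by omega) hc)
  have hmaps : ∀ i ∈ Finset.range w.length, dstar R p (w.take i) ∈ Tᶜ := by
    intro i hi
    simp only [Finset.mem_compl]
    exact hnotin i (Finset.mem_range.mp hi)
  have hcard := Finset.card_le_card_of_injOn _ hmaps hinj
  simpa [Finset.card_compl] using hcard

/-- Shortest word between two states inside a closed set `B`: length `< |B|`. -/
lemma min_word_in_set {B : Finset R.S} (hB : ∀ q ∈ B, ∀ bb, R.ρ q bb ∈ B)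
    {t s : R.S} (ht : t ∈ B) (h : ∃ w, dstar R t w = s) :
    ∃ w, dstar R t w = s ∧ w.length + 1 ≤ B.card := by
  classical
  obtain ⟨w, hw, hmin⟩ := exists_min_word (fun w => dstar R t w = s) h
  refine ⟨w, hw, ?_⟩
  have key : ∀ a b : ℕ, a < b → b < w.length + 1 →
      dstar R t (w.take a) = dstar R t (w.take b) → False := by
    intro a b hab hb heq
    have hcut : dstar R t (w.take a ++ w.drop b) = s := by
      have h2 : dstar R t (w.take b ++ w.drop b) = s := by
        rw [List.take_append_drop]; exact hw
      simp only [dstar_append] at h2 ⊢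
      rw [heq]; exact h2
    have := hmin _ hcut
    simp [List.length_append, List.length_take, List.length_drop] at this
    omega
  have hinj : Set.InjOn (fun i => dstar R t (w.take i)) (Finset.range (w.length + 1)) := by
    intro i hi i' hi' heq
    have heq' : dstar R t (w.take i) = dstar R t (w.take i') := heq
    simp only [Finset.coe_range, Set.mem_Iio] at hi hi'
    rcases lt_trichotomy i i' with h | h | h
    · exact absurd heq' (by intro hc; exact key i i' h (by omega) hc)
    · exact h
    · exact absurd heq'.symm (by intro hc; exact key i' i h (by omega) hc)
  have hmaps : ∀ i ∈ Finset.range (w.length + 1), dstar R t (w.take i) ∈ B := by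
    intro i _
    exact dstar_mem_closed R hB ht _
  have hcard := Finset.card_le_card_of_injOn _ hmaps hinj
  simpa using hcard

lemma exists_bottom : ∃ b, Reach R R.init b ∧ ∀ q, Reach R b q → Reach R q b := by
  classical
  let f : R.S → ℕ := fun q => (Finset.univ.filter (fun q' => Reach R q q')).card
  obtain ⟨b, hb, hmin⟩ := Finset.exists_min_image
    (Finset.univ.filter (fun q => Reach R R.init q)) f
    ⟨R.init, by simp [reach_refl]⟩
  have hreach : Reach R R.init b := by simpa using hb
  refine ⟨b, hreach, fun q hq => ?_⟩
  have hq0 : Reach R R.init q := reach_trans R hreach hq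
  have hle : f b ≤ f q := hmin q (by simpa using hq0)
  have hsub : (Finset.univ.filter (fun q' => Reach R q q')) ⊆
      (Finset.univ.filter (fun q' => Reach R b q')) := by
    intro x hx
    simp only [Finset.mem_filter, Finset.mem_univ, true_and] at hx ⊢
    exact reach_trans R hq hx
  have heq := Finset.eq_of_subset_of_card_le hsub hle
  have : b ∈ Finset.univ.filter (fun q' => Reach R q q') := by
    rw [heq]; simp [reach_refl]
  simpa using this

end Cert

/-- A DBW-refuter for `L` with `n` states yields a certificate `(x, x₁, x₂)` for
non-DBW-recognizability of `L` with `|x| + |x₁| + |x₂| ≤ 2n`. -/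
theorem stmt_7 {Sig : Type} [Fintype Sig] (L : Set (ℕ → Sig))
    (R : Transducer Bool Sig) (hR : DBWRefuter L R) :
    ∃ x x₁ x₂ : List Sig, x₁ ≠ [] ∧ x₂ ≠ [] ∧
      LangA x x₁ x₂ ⊆ L ∧ LangB x x₁ x₂ ∩ L = ∅ ∧
      x.length + x₁.length + x₂.length ≤ 2 * Fintype.card R.S := by
  classical
  obtain ⟨b, hreach_b, hbot⟩ := Cert.exists_bottom R
  set B : Finset R.S := Finset.univ.filter (fun q => Cert.Reach R b q) with hBdef
  have hbB : b ∈ B := by simp [hBdef, Cert.reach_refl]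
  have hclosed : ∀ q ∈ B, ∀ bb, R.ρ q bb ∈ B := by
    intro q hq bb
    simp only [hBdef, Finset.mem_filter, Finset.mem_univ, true_and] at hq ⊢
    obtain ⟨w, hw⟩ := hq
    exact ⟨w ++ [bb], by simp [hw]⟩
  have hBreach : ∀ q ∈ B, ∀ q' ∈ B, Cert.Reach R q q' := by
    intro q hq q' hq'
    simp only [hBdef, Finset.mem_filter, Finset.mem_univ, true_and] at hq hq'
    exact Cert.reach_trans R (hbot q hq) hq'
  set n := Fintype.card R.S with hn
  set m := B.card with hm
  have hmn : m ≤ n := Finset.card_le_univ B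
  have hm1 : 1 ≤ m := Finset.card_pos.mpr ⟨b, hbB⟩
  -- shortest word into B
  obtain ⟨v, hvB, hvlen⟩ := Cert.min_word_to_set R R.init B
    ⟨hreach_b.choose, by
      simp only [hBdef, Finset.mem_filter, Finset.mem_univ, true_and]
      rw [hreach_b.choose_spec]
      exact Cert.reach_refl R b⟩
  set q0 := Cert.dstar R R.init v with hq0def
  have hq0 : q0 ∈ B := hvB
  -- pigeonhole on the all-rej run from q0
  have hcard : B.card < (Finset.range (m + 1)).card := by simp [hm]
  obtain ⟨i0, hi0, j0, hj0, hne, heq0⟩ :=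
    Finset.exists_ne_map_eq_of_card_lt_of_maps_to hcard
      (fun i _ => Cert.dstar_mem_closed R hclosed hq0 (List.replicate i false))
  have hkey : ∃ i j, i < j ∧ j ≤ m ∧
      Cert.dstar R q0 (List.replicate i false) = Cert.dstar R q0 (List.replicate j false) := by
    rcases lt_or_gt_of_ne hne with h | h
    · exact ⟨i0, j0, h, by have := Finset.mem_range.mp hj0; omega, heq0⟩
    · exact ⟨j0, i0, h, by have := Finset.mem_range.mp hi0; omega, heq0.symm⟩
  obtain ⟨i, j, hij, hjm, heq⟩ := hkey
  set s := Cert.dstar R q0 (List.replicate i false) with hsdef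
  have hsB : s ∈ B := Cert.dstar_mem_closed R hclosed hq0 _
  set c := j - i with hc
  have hc1 : 1 ≤ c := by omega
  have hloop1 : Cert.dstar R s (List.replicate c false) = s := by
    have h2 : Cert.dstar R q0 (List.replicate i false ++ List.replicate c false) =
        Cert.dstar R q0 (List.replicate j false) := by
      rw [← List.replicate_add]
      congr 2
      omega
    rw [Cert.dstar_append, ← hsdef] at h2
    rw [h2]
    exact heq.symm
  -- return path after an acc
  have htB : R.ρ s true ∈ B := hclosed s hsB true
  obtain ⟨wret, hwret, hretlen⟩ := Cert.min_word_in_set R hclosed htB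
    (hBreach _ htB s hsB)
  set uin := v ++ List.replicate i false with huindef
  have huin : Cert.dstar R R.init uin = s := by
    rw [huindef, Cert.dstar_append, ← hq0def, ← hsdef]
  set w₁in := List.replicate c false with hw1def
  have hloop2 : Cert.dstar R s (true :: wret) = s := by
    rw [Cert.dstar_cons]
    exact hwret
  refine ⟨Cert.outList R R.init uin, Cert.outList R s w₁in,
    Cert.outList R s (true :: wret), ?_, ?_, ?_, ?_, ?_⟩
  · intro h
    have := congrArg List.length h
    simp [hw1def] at this
    omega
  · intro h
    have := congrArg List.length h
    simp at this
  · exact Cert.langA_sub R L hR s uin w₁in (true :: wret) huin hloop1 hloop2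
      (fun bb hb => List.eq_of_mem_replicate hb)
      (by intro h; have := congrArg List.length h; simp [hw1def] at this; omega)
  · exact Cert.langB_empty R L hR s uin w₁in wret huin hloop1 hloop2
  · have h1 : uin.length = v.length + i := by simp [huindef]
    have h2 : w₁in.length = c := by simp [hw1def]
    simp only [Cert.length_outList, h1, h2, List.length_cons]
    omega
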